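/- Let W be a real symmetric n×n matrix with tr W > 0 and let ν > 0. Define F(W) = (σ₂(W) − ν)/σ₁(W). Then the gradient matrix (∂F/∂wᵢⱼ) = (σ₁(W)·T − σ₂(W)·I + ν·I)/σ₁(W)², where T = σ₁(W)·I − W is the first Newton transformation, is positive definite. -/

import Mathlib

open Matrix

/-- σ₂ of a matrix: σ₂(W) = ((tr W)² − tr(W²))/2. -/
noncomputable def sigma2 {n : ℕ} (W : Matrix (Fin n) (Fin n) ℝ) : ℝ :=
  (W.trace ^ 2 - (W * W).trace) / 2

lemma posDef_smul_real {n : ℕ} {M : Matrix (Fin n) (Fin n) ℝ} (hM : M.PosDef)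
    {c : ℝ} (hc : 0 < c) : (c • M).PosDef := by
  refine Matrix.PosDef.of_dotProduct_mulVec_pos ?_ (fun x hx => ?_)
  · unfold Matrix.IsHermitian
    rw [conjTranspose_smul, hM.1]
    simp
  · rw [smul_mulVec, dotProduct_smul, smul_eq_mul]
    exact mul_pos hc (hM.dotProduct_mulVec_pos hx)

lemma posSemidef_smul_real {n : ℕ} {M : Matrix (Fin n) (Fin n) ℝ} (hM : M.PosSemidef)
    {c : ℝ} (hc : 0 ≤ c) : (c • M).PosSemidef := by
  refine Matrix.PosSemidef.of_dotProduct_mulVec_nonneg ?_ (fun x => ?_)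
  · unfold Matrix.IsHermitian
    rw [conjTranspose_smul, hM.1]
    simp
  · rw [smul_mulVec, dotProduct_smul, smul_eq_mul]
    exact mul_nonneg hc (hM.dotProduct_mulVec_nonneg x)

/-- tr(W²)·I − W² is positive semidefinite for symmetric W. -/
lemma trace_sq_smul_one_sub_sq_posSemidef {n : ℕ} (W : Matrix (Fin n) (Fin n) ℝ)
    (hW : W.IsSymm) : ((W * W).trace • (1 : Matrix (Fin n) (Fin n) ℝ) - W * W).PosSemidef := by
  have hsymm : ∀ i j, W j i = W i j := fun i j => by
    conv_lhs => rw [← hW]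
    rfl
  refine Matrix.PosSemidef.of_dotProduct_mulVec_nonneg ?_ (fun x => ?_)
  · unfold Matrix.IsHermitian
    rw [conjTranspose_sub, conjTranspose_smul, conjTranspose_one, conjTranspose_mul]
    have : Wᴴ = W := by rw [conjTranspose_eq_transpose_of_trivial, hW]
    rw [this]
    simp
  · have key : (W *ᵥ x) ⬝ᵥ (W *ᵥ x) ≤ (W * W).trace * (x ⬝ᵥ x) := by
      have htr2 : (W * W).trace = ∑ i, ∑ j, W i j ^ 2 := by
        simp only [Matrix.trace, Matrix.diag, Matrix.mul_apply]
        refine Finset.sum_congr rfl fun i _ => Finset.sum_congr rfl fun j _ => ?_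
        rw [hsymm i j, sq]
      have hd : (W *ᵥ x) ⬝ᵥ (W *ᵥ x) = ∑ i, (∑ j, W i j * x j) ^ 2 := by
        simp only [dotProduct, mulVec, dotProduct, sq]
      rw [hd, htr2, Finset.sum_mul]
      refine Finset.sum_le_sum fun i _ => ?_
      have := Finset.sum_mul_sq_le_sq_mul_sq Finset.univ (fun j => W i j) x
      calc (∑ j, W i j * x j) ^ 2 ≤ (∑ j, W i j ^ 2) * ∑ j, x j ^ 2 := this
        _ = (∑ j, W i j ^ 2) * (x ⬝ᵥ x) := by
            congr 1; simp [dotProduct, sq]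
    have hWx : x ⬝ᵥ ((W * W) *ᵥ x) = (W *ᵥ x) ⬝ᵥ (W *ᵥ x) := by
      rw [← mulVec_mulVec, dotProduct_mulVec]
      congr 1
      rw [← mulVec_transpose, hW]
    simp only [star_trivial]
    rw [sub_mulVec, dotProduct_sub, smul_mulVec, one_mulVec, dotProduct_smul, smul_eq_mul,
      hWx]
    linarith

/-- For W symmetric with tr W > 0 and ν > 0, the gradient matrix of
F(W) = (σ₂(W) − ν)/σ₁(W), namely (σ₁(W)·T − σ₂(W)·I + ν·I)/σ₁(W)² with
T = σ₁(W)·I − W the first Newton transformation, is positive definite. -/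
theorem stmt_9 {n : ℕ} (W : Matrix (Fin n) (Fin n) ℝ) (hW : W.IsSymm)
    (htr : 0 < W.trace) (ν : ℝ) (hν : 0 < ν) :
    ((W.trace ^ 2)⁻¹ •
        (W.trace • (W.trace • (1 : Matrix (Fin n) (Fin n) ℝ) - W) -
          sigma2 W • (1 : Matrix (Fin n) (Fin n) ℝ) +
          ν • (1 : Matrix (Fin n) (Fin n) ℝ))).PosDef := by
  set t := W.trace with ht
  set B : Matrix (Fin n) (Fin n) ℝ := t • 1 - W with hBdef
  have hBh : Bᴴ = B := by
    rw [hBdef, conjTranspose_sub, conjTranspose_smul, conjTranspose_one,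
      conjTranspose_eq_transpose_of_trivial, hW]
    simp
  have hBB : B * B = (t ^ 2) • (1 : Matrix (Fin n) (Fin n) ℝ) - (2 * t) • W + W * W := by
    rw [hBdef]
    simp only [Matrix.sub_mul, Matrix.mul_sub, Matrix.smul_mul, Matrix.mul_smul,
      Matrix.one_mul, Matrix.mul_one, smul_smul]
    module
  have hE : t • (t • (1 : Matrix (Fin n) (Fin n) ℝ) - W) -
      sigma2 W • (1 : Matrix (Fin n) (Fin n) ℝ) + ν • (1 : Matrix (Fin n) (Fin n) ℝ) =
      (1 / 2 : ℝ) • (B * B) +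
        ((1 / 2 : ℝ) • ((W * W).trace • (1 : Matrix (Fin n) (Fin n) ℝ) - W * W) +
          ν • (1 : Matrix (Fin n) (Fin n) ℝ)) := by
    rw [hBB, sigma2, ← ht]
    match_scalars <;> ring
  rw [hE]
  have h1 : ((1 / 2 : ℝ) • (B * B)).PosSemidef :=
    posSemidef_smul_real (by have := posSemidef_conjTranspose_mul_self B; rwa [hBh] at this)
      (by norm_num)
  have h2 : ((1 / 2 : ℝ) • ((W * W).trace • (1 : Matrix (Fin n) (Fin n) ℝ) - W * W)).PosSemidef :=
    posSemidef_smul_real (trace_sq_smul_one_sub_sq_posSemidef W hW) (by norm_num)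
  have h3 : (ν • (1 : Matrix (Fin n) (Fin n) ℝ)).PosDef :=
    posDef_smul_real Matrix.PosDef.one hν
  exact posDef_smul_real (Matrix.PosDef.posSemidef_add h1 (Matrix.PosDef.posSemidef_add h2 h3))
    (inv_pos.mpr (pow_pos htr 2))
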